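/- Let K ≥ 1 and μ ∈ [1/K, 1] be real, and let q be an integer with ⌈1/μ⌉ ≤ q ≤ K. Then the pair (r1, r2) = (K/q, ⌊qμ⌋) satisfies: (i) q·r1 = K ∈ [q, K]; (ii) ⌊qμ⌋ ≤ ⌊Kμ⌋; (iii) r1·r2 = (K/q)·⌊qμ⌋ ≤ Kμ; and (iv) C(K, r2) - C(K-q, r2) ≥ (q/K)·C(K, r2). Hence the choice of rates from the prior scheme is always feasible for the conditions of Proposition 1. -/
import Mathlib

lemma aux_step (n r : ℕ) (hn : 1 ≤ n) (hr : 1 ≤ r) :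
    n * (n - 1).choose r ≤ (n - 1) * n.choose r := by
  obtain ⟨m, rfl⟩ : ∃ m, n = m + 1 := ⟨n - 1, by omega⟩
  obtain ⟨s, rfl⟩ : ∃ s, r = s + 1 := ⟨r - 1, by omega⟩
  simp only [Nat.add_sub_cancel]
  have key : m.choose (s + 1) ≤ m * m.choose s := by
    calc m.choose (s + 1) ≤ m.choose (s + 1) * (s + 1) :=
          Nat.le_mul_of_pos_right _ (by omega)
      _ = m.choose s * (m - s) := Nat.choose_succ_right_eq m s
      _ ≤ m.choose s * m := Nat.mul_le_mul_left _ (Nat.sub_le m s)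
      _ = m * m.choose s := Nat.mul_comm _ _
  rw [Nat.choose_succ_succ]
  nlinarith [key]

lemma aux_main (K q r : ℕ) (hq : q ≤ K) (hr : 1 ≤ r) :
    K * (K - q).choose r ≤ (K - q) * K.choose r := by
  induction q with
  | zero => simp
  | succ p ih =>
    have hp : p ≤ K := by omega
    have ih' := ih hp
    have hstep := aux_step (K - p) r (by omega) hr
    have h1 : K - (p + 1) = (K - p) - 1 := by omega
    rw [h1]
    have hKp : 1 ≤ K - p := by omega
    -- (K-p) * (K * C(K-p-1,r)) ≤ (K-p) * ((K-p-1) * C(K,r))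
    have h2 : (K - p) * (K * (K - p - 1).choose r) ≤ (K - p) * ((K - p - 1) * K.choose r) := by
      calc (K - p) * (K * (K - p - 1).choose r)
          = K * ((K - p) * (K - p - 1).choose r) := by ring
        _ ≤ K * ((K - p - 1) * (K - p).choose r) := Nat.mul_le_mul_left _ hstep
        _ = (K - p - 1) * (K * (K - p).choose r) := by ring
        _ ≤ (K - p - 1) * ((K - p) * K.choose r) := Nat.mul_le_mul_left _ ih'
        _ = (K - p) * ((K - p - 1) * K.choose r) := by ring
    exact Nat.le_of_mul_le_mul_left h2 (by omega)

theorem stmt_12 (K q : ℕ) (hK : 1 ≤ K) (μ : ℝ) (hμl : 1 / (K : ℝ) ≤ μ) (hμu : μ ≤ 1)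
    (hql : ⌈1 / μ⌉₊ ≤ q) (hqu : q ≤ K) :
    (q : ℝ) * ((K : ℝ) / q) = (K : ℝ) ∧ q ≤ K ∧
    ⌊(q : ℝ) * μ⌋₊ ≤ ⌊(K : ℝ) * μ⌋₊ ∧
    ((K : ℝ) / q) * (⌊(q : ℝ) * μ⌋₊ : ℝ) ≤ (K : ℝ) * μ ∧
    (K.choose ⌊(q : ℝ) * μ⌋₊ : ℝ) - ((K - q).choose ⌊(q : ℝ) * μ⌋₊ : ℝ)
      ≥ ((q : ℝ) / K) * (K.choose ⌊(q : ℝ) * μ⌋₊ : ℝ) := by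
  have hKpos : (0 : ℝ) < K := by exact_mod_cast hK
  have hμpos : 0 < μ := lt_of_lt_of_le (by positivity) hμl
  have hceil : 1 / μ ≤ (q : ℝ) := by
    have := Nat.ceil_le.mp (le_refl ⌈1 / μ⌉₊)
    exact le_trans this (by exact_mod_cast hql)
  have hq1 : 1 ≤ q := by
    by_contra h
    have : q = 0 := by omega
    subst this
    simp at hceil
    have : (0:ℝ) < 1 / μ := by positivity
    linarith
  have hqpos : (0 : ℝ) < q := by exact_mod_cast hq1
  have hqμ : 1 ≤ (q : ℝ) * μ := by
    rw [div_le_iff₀ hμpos] at hceil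
    linarith
  have hr1 : 1 ≤ ⌊(q : ℝ) * μ⌋₊ := Nat.le_floor (by exact_mod_cast hqμ)
  refine ⟨by field_simp, hqu, ?_, ?_, ?_⟩
  · apply Nat.floor_le_floor
    have : (q : ℝ) ≤ K := by exact_mod_cast hqu
    nlinarith
  · have hfl : (⌊(q : ℝ) * μ⌋₊ : ℝ) ≤ (q : ℝ) * μ := Nat.floor_le (by positivity)
    rw [div_mul_eq_mul_div, div_le_iff₀ hqpos]
    nlinarith
  · set r := ⌊(q : ℝ) * μ⌋₊
    have hnat := aux_main K q r hqu hr1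
    have hcast : ((K - q : ℕ) : ℝ) = (K : ℝ) - q := by
      push_cast [Nat.cast_sub hqu]; ring
    have h2 : (K : ℝ) * ((K - q).choose r : ℝ) ≤ ((K : ℝ) - q) * (K.choose r : ℝ) := by
      rw [← hcast]
      exact_mod_cast hnat
    rw [ge_iff_le, div_mul_eq_mul_div, div_le_iff₀ hKpos]
    nlinarith
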